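/- Fix real numbers t0 < t1 and 0 ≤ x_min < x_max. Let ψ : [t0,t1] × [x_min,x_max] → ℝ be C² and satisfy ∂_t ψ(t,x) + ∂_x ψ(t,x) = 0 for all (t,x), with boundary values ψ(t, x_min) = u(t) and ψ(t, x_max) = 0 for all t ∈ [t0,t1], where u is C¹. Define y(t) = ∫_{x_min}^{x_max} x³ ψ(t,x) dx. Then y is twice differentiable on [t0,t1] and y″(t) = 6 ∫_{x_min}^{x_max} x ψ(t,x) dx + 3 x_min² u(t) + x_min³ u′(t) for all t ∈ [t0,t1]. -/

import Mathlib

set_option autoImplicit false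

open Set MeasureTheory intervalIntegral

/-- Fubini for continuous functions on a rectangle, interval-integral form. -/
lemma swap_aux (a b c d : ℝ) (hab : a ≤ b) (hcd : c ≤ d) (f : ℝ → ℝ → ℝ)
    (hf : ContinuousOn (fun p : ℝ × ℝ => f p.1 p.2) (Icc a b ×ˢ Icc c d)) :
    (∫ x in a..b, ∫ y in c..d, f x y) = ∫ y in c..d, ∫ x in a..b, f x y := by
  obtain ⟨C, hC⟩ := (isCompact_Icc.prod isCompact_Icc).exists_bound_of_continuousOn hf
  haveI : IsFiniteMeasure (volume.restrict (Ioc a b)) :=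
    ⟨by rw [Measure.restrict_apply_univ]; exact measure_Ioc_lt_top⟩
  haveI : IsFiniteMeasure (volume.restrict (Ioc c d)) :=
    ⟨by rw [Measure.restrict_apply_univ]; exact measure_Ioc_lt_top⟩
  have hsub : (Ioc a b ×ˢ Ioc c d) ⊆ (Icc a b ×ˢ Icc c d) :=
    Set.prod_mono Ioc_subset_Icc_self Ioc_subset_Icc_self
  have hmeq : (volume.restrict (Ioc a b)).prod (volume.restrict (Ioc c d))
      = (volume.prod volume).restrict (Ioc a b ×ˢ Ioc c d) := Measure.prod_restrict _ _
  have hint : Integrable (Function.uncurry f)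
      ((volume.restrict (Ioc a b)).prod (volume.restrict (Ioc c d))) := by
    refine Integrable.mono' (integrable_const C) ?_ ?_
    · rw [hmeq]
      exact ((hf.mono hsub).aestronglyMeasurable (measurableSet_Ioc.prod measurableSet_Ioc))
    · rw [hmeq]
      exact ae_restrict_of_forall_mem (measurableSet_Ioc.prod measurableSet_Ioc)
        fun p hp => hC p (hsub hp)
  have := MeasureTheory.integral_integral_swap (μ := volume.restrict (Ioc a b))
      (ν := volume.restrict (Ioc c d)) (f := f) hint
  rw [integral_of_le hab, integral_of_le hcd]
  simp only [integral_of_le hcd, integral_of_le hab] at this ⊢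
  exact this

/-- Differentiation under the integral sign with weight `w`, on a rectangle,
with one-sided derivatives within `Icc t0 t1`. -/
lemma paramDeriv (t0 t1 xmin xmax : ℝ) (ht : t0 < t1) (hx : xmin < xmax)
    (F Ft : ℝ → ℝ → ℝ) (w : ℝ → ℝ) (hw : Continuous w)
    (hF : ContinuousOn (fun p : ℝ × ℝ => F p.1 p.2) (Icc t0 t1 ×ˢ Icc xmin xmax))
    (hFt : ContinuousOn (fun p : ℝ × ℝ => Ft p.1 p.2) (Icc t0 t1 ×ˢ Icc xmin xmax))
    (hd : ∀ t ∈ Icc t0 t1, ∀ x ∈ Icc xmin xmax,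
      HasDerivWithinAt (fun s => F s x) (Ft t x) (Icc t0 t1) t) :
    ∀ t ∈ Icc t0 t1,
      HasDerivWithinAt (fun s => ∫ x in xmin..xmax, w x * F s x)
        (∫ x in xmin..xmax, w x * Ft t x) (Icc t0 t1) t := by
  have hxle : xmin ≤ xmax := hx.le
  have hFslice : ∀ s ∈ Icc t0 t1, ContinuousOn (fun x => F s x) (Icc xmin xmax) := by
    intro s hs
    exact hF.comp ((continuous_const.prodMk continuous_id).continuousOn) fun x hx => ⟨hs, hx⟩
  have hFtslice : ∀ s ∈ Icc t0 t1, ContinuousOn (fun x => Ft s x) (Icc xmin xmax) := by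
    intro s hs
    exact hFt.comp ((continuous_const.prodMk continuous_id).continuousOn) fun x hx => ⟨hs, hx⟩
  have hFtslice' : ∀ x ∈ Icc xmin xmax, ContinuousOn (fun s => Ft s x) (Icc t0 t1) := by
    intro x hxm
    exact hFt.comp ((continuous_id.prodMk continuous_const).continuousOn) fun s hs => ⟨hs, hxm⟩
  have hFslice' : ∀ x ∈ Icc xmin xmax, ContinuousOn (fun s => F s x) (Icc t0 t1) := by
    intro x hxm
    exact hF.comp ((continuous_id.prodMk continuous_const).continuousOn) fun s hs => ⟨hs, hxm⟩
  -- integrability helpers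
  have hintw : ∀ s ∈ Icc t0 t1,
      IntervalIntegrable (fun x => w x * F s x) volume xmin xmax := by
    intro s hs
    apply ContinuousOn.intervalIntegrable
    rw [uIcc_of_le hxle]
    exact (hw.continuousOn).mul (hFslice s hs)
  have hintwt : ∀ s ∈ Icc t0 t1,
      IntervalIntegrable (fun x => w x * Ft s x) volume xmin xmax := by
    intro s hs
    apply ContinuousOn.intervalIntegrable
    rw [uIcc_of_le hxle]
    exact (hw.continuousOn).mul (hFtslice s hs)
  set g : ℝ → ℝ := fun r => ∫ x in xmin..xmax, w x * Ft r x with hg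
  -- continuity of g on Icc t0 t1
  obtain ⟨M, hM⟩ := (isCompact_Icc.prod isCompact_Icc).exists_bound_of_continuousOn hFt
  obtain ⟨W, hW⟩ := isCompact_Icc.exists_bound_of_continuousOn (hw.continuousOn (s := Icc xmin xmax))
  have hgc : ContinuousOn g (Icc t0 t1) := by
    intro t htm
    apply intervalIntegral.continuousWithinAt_of_dominated_interval
      (bound := fun _ => W * M)
    · filter_upwards [self_mem_nhdsWithin] with s hs
      exact (((hw.continuousOn).mul (hFtslice s hs)).mono
        (by rw [uIoc_of_le hxle]; exact Ioc_subset_Icc_self)).aestronglyMeasurable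
        (by rw [uIoc_of_le hxle]; exact measurableSet_Ioc)
    · filter_upwards [self_mem_nhdsWithin] with s hs
      filter_upwards with x hxm
      have hxm' : x ∈ Icc xmin xmax := by
        rw [uIoc_of_le hxle] at hxm; exact Ioc_subset_Icc_self hxm
      calc ‖w x * Ft s x‖ = ‖w x‖ * ‖Ft s x‖ := norm_mul _ _
        _ ≤ W * M := by
            apply mul_le_mul (hW x hxm') (hM (s, x) ⟨hs, hxm'⟩) (norm_nonneg _)
            exact le_trans (norm_nonneg _) (hW x hxm')
    · exact intervalIntegrable_const
    · filter_upwards with x hxm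
      have hxm' : x ∈ Icc xmin xmax := by
        rw [uIoc_of_le hxle] at hxm; exact Ioc_subset_Icc_self hxm
      exact (continuousWithinAt_const).mul ((hFtslice' x hxm') t htm)
  -- the key identity
  have key : ∀ s ∈ Icc t0 t1,
      (∫ x in xmin..xmax, w x * F s x)
        = (∫ x in xmin..xmax, w x * F t0 x) + ∫ r in t0..s, g r := by
    intro s hs
    have hts : t0 ≤ s := hs.1
    have ftc : ∀ x ∈ Icc xmin xmax, F s x - F t0 x = ∫ r in t0..s, Ft r x := by
      intro x hxm
      rw [intervalIntegral.integral_eq_sub_of_hasDeriv_right_of_le hts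
        ((hFslice' x hxm).mono (Icc_subset_Icc le_rfl hs.2))
        (fun r hr => ?_) (((hFtslice' x hxm).mono
          (Icc_subset_Icc le_rfl hs.2)).intervalIntegrable_of_Icc hts)]
      have hrm : r ∈ Icc t0 t1 := ⟨le_of_lt hr.1, le_trans (le_of_lt hr.2) hs.2⟩
      have : HasDerivAt (fun r => F r x) (Ft r x) r :=
        (hd r hrm x hxm).hasDerivAt (Icc_mem_nhds hr.1 (lt_of_lt_of_le hr.2 hs.2))
      exact this.hasDerivWithinAt
    have step1 : (∫ x in xmin..xmax, w x * F s x) - (∫ x in xmin..xmax, w x * F t0 x)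
        = ∫ x in xmin..xmax, ∫ r in t0..s, w x * Ft r x := by
      rw [← intervalIntegral.integral_sub (hintw s hs) (hintw t0 ⟨le_rfl, ht.le⟩)]
      apply intervalIntegral.integral_congr
      intro x hxm
      rw [uIcc_of_le hxle] at hxm
      simp only [← mul_sub, ftc x hxm, ← intervalIntegral.integral_const_mul]
    have step2 : (∫ x in xmin..xmax, ∫ r in t0..s, w x * Ft r x)
        = ∫ r in t0..s, g r := by
      have hcont : ContinuousOn (fun p : ℝ × ℝ => w p.1 * Ft p.2 p.1)
          (Icc xmin xmax ×ˢ Icc t0 s) :=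
        ((hw.comp continuous_fst).continuousOn).mul
          (hFt.comp ((continuous_snd.prodMk continuous_fst).continuousOn)
            fun p hp => ⟨Icc_subset_Icc le_rfl hs.2 hp.2, hp.1⟩)
      rw [swap_aux xmin xmax t0 s hxle hts (fun x r => w x * Ft r x) hcont]
    linarith [step1, step2]
  -- conclude via FTC-1
  intro t htm
  haveI : Fact (t ∈ Icc t0 t1) := ⟨htm⟩
  have hgint : IntervalIntegrable g volume t0 t := by
    apply ContinuousOn.intervalIntegrable
    exact hgc.mono (by rw [uIcc_of_le htm.1]; exact Icc_subset_Icc le_rfl htm.2)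
  have hftc : HasDerivWithinAt (fun s => ∫ r in t0..s, g r) (g t) (Icc t0 t1) t :=
    intervalIntegral.integral_hasDerivWithinAt_right hgint
      (hgc.stronglyMeasurableAtFilter_nhdsWithin measurableSet_Icc t)
      (hgc t htm)
  have : HasDerivWithinAt
      (fun s => (∫ x in xmin..xmax, w x * F t0 x) + ∫ r in t0..s, g r)
      (g t) (Icc t0 t1) t := hftc.const_add _
  exact this.congr (fun s hs => (key s hs)) (key t htm)

/-- Second derivative identity for the third-moment output of the unit-speed transport
equation `∂ₜψ + ∂ₓψ = 0` with `ψ(t, xmax) = 0`: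
`y''(t) = 6 ∫ x ψ(t,x) dx + 3 xmin² u(t) + xmin³ u'(t)` where `u(t) = ψ(t, xmin)`. -/
theorem stmt6 (t0 t1 xmin xmax : ℝ) (ht : t0 < t1) (hx0 : 0 ≤ xmin) (hx : xmin < xmax)
    (ψ : ℝ → ℝ → ℝ) (u : ℝ → ℝ)
    (hC : ContDiffOn ℝ 2 (fun p : ℝ × ℝ => ψ p.1 p.2) (Set.Icc t0 t1 ×ˢ Set.Icc xmin xmax))
    (hu : ContDiffOn ℝ 1 u (Set.Icc t0 t1))
    (hPDE : ∀ t ∈ Set.Icc t0 t1, ∀ x ∈ Set.Icc xmin xmax,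
      derivWithin (fun s => ψ s x) (Set.Icc t0 t1) t
        + derivWithin (fun ξ => ψ t ξ) (Set.Icc xmin xmax) x = 0)
    (hbmin : ∀ t ∈ Set.Icc t0 t1, ψ t xmin = u t)
    (hbmax : ∀ t ∈ Set.Icc t0 t1, ψ t xmax = 0) :
    ∃ y1 : ℝ → ℝ,
      (∀ t ∈ Set.Icc t0 t1,
        HasDerivWithinAt (fun s => ∫ x in xmin..xmax, x ^ 3 * ψ s x) (y1 t)
          (Set.Icc t0 t1) t) ∧
      (∀ t ∈ Set.Icc t0 t1,
        HasDerivWithinAt y1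
          ((6 * ∫ x in xmin..xmax, x * ψ t x) + 3 * xmin ^ 2 * u t
            + xmin ^ 3 * derivWithin u (Set.Icc t0 t1) t)
          (Set.Icc t0 t1) t) := by
  have hxle : xmin ≤ xmax := hx.le
  set f : ℝ × ℝ → ℝ := fun p => ψ p.1 p.2 with hf
  set R : Set (ℝ × ℝ) := Icc t0 t1 ×ˢ Icc xmin xmax with hR
  have hRu : UniqueDiffOn ℝ R := (uniqueDiffOn_Icc ht).prod (uniqueDiffOn_Icc hx)
  have hfd : DifferentiableOn ℝ f R := hC.differentiableOn two_ne_zero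
  set Ft : ℝ → ℝ → ℝ := fun t x => fderivWithin ℝ f R (t, x) (1, 0) with hFt
  set Fx : ℝ → ℝ → ℝ := fun t x => fderivWithin ℝ f R (t, x) (0, 1) with hFx
  -- slice derivatives
  have hslicet : ∀ t ∈ Icc t0 t1, ∀ x ∈ Icc xmin xmax,
      HasDerivWithinAt (fun s => ψ s x) (Ft t x) (Icc t0 t1) t := by
    intro t htm x hxm
    have h1 : HasFDerivWithinAt f (fderivWithin ℝ f R (t, x)) R (t, x) :=
      (hfd _ ⟨htm, hxm⟩).hasFDerivWithinAt
    have h2 : HasDerivWithinAt (fun s : ℝ => (s, x)) ((1 : ℝ), (0 : ℝ)) (Icc t0 t1) t :=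
      ((hasDerivAt_id t).prodMk (hasDerivAt_const t x)).hasDerivWithinAt
    have hmaps : MapsTo (fun s : ℝ => (s, x)) (Icc t0 t1) R := fun s hs => ⟨hs, hxm⟩
    exact h1.comp_hasDerivWithinAt t h2 hmaps
  have hslicex : ∀ t ∈ Icc t0 t1, ∀ x ∈ Icc xmin xmax,
      HasDerivWithinAt (fun ξ => ψ t ξ) (Fx t x) (Icc xmin xmax) x := by
    intro t htm x hxm
    have h1 : HasFDerivWithinAt f (fderivWithin ℝ f R (t, x)) R (t, x) :=
      (hfd _ ⟨htm, hxm⟩).hasFDerivWithinAt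
    have h2 : HasDerivWithinAt (fun ξ : ℝ => (t, ξ)) ((0 : ℝ), (1 : ℝ)) (Icc xmin xmax) x :=
      ((hasDerivAt_const x t).prodMk (hasDerivAt_id x)).hasDerivWithinAt
    have hmaps : MapsTo (fun ξ : ℝ => (t, ξ)) (Icc xmin xmax) R := fun ξ hξ => ⟨htm, hξ⟩
    exact h1.comp_hasDerivWithinAt x h2 hmaps
  -- continuity of partial derivatives
  have hfderivc : ContinuousOn (fun p => fderivWithin ℝ f R p) R :=
    hC.continuousOn_fderivWithin hRu one_le_two
  have hFtc : ContinuousOn (fun p : ℝ × ℝ => Ft p.1 p.2) R := by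
    have : ContinuousOn (fun p : ℝ × ℝ => fderivWithin ℝ f R p ((1 : ℝ), (0 : ℝ))) R :=
      hfderivc.clm_apply continuousOn_const
    exact this
  have hFxc : ContinuousOn (fun p : ℝ × ℝ => Fx p.1 p.2) R := by
    have : ContinuousOn (fun p : ℝ × ℝ => fderivWithin ℝ f R p ((0 : ℝ), (1 : ℝ))) R :=
      hfderivc.clm_apply continuousOn_const
    exact this
  have hψc : ContinuousOn (fun p : ℝ × ℝ => ψ p.1 p.2) R := hC.continuousOn
  -- PDE in terms of Ft, Fx
  have hPDE' : ∀ t ∈ Icc t0 t1, ∀ x ∈ Icc xmin xmax, Ft t x = -Fx t x := by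
    intro t htm x hxm
    have e1 : derivWithin (fun s => ψ s x) (Icc t0 t1) t = Ft t x :=
      (hslicet t htm x hxm).derivWithin (uniqueDiffOn_Icc ht t htm)
    have e2 : derivWithin (fun ξ => ψ t ξ) (Icc xmin xmax) x = Fx t x :=
      (hslicex t htm x hxm).derivWithin (uniqueDiffOn_Icc hx x hxm)
    have := hPDE t htm x hxm
    rw [e1, e2] at this
    linarith
  -- slice continuity helpers
  have hψslice : ∀ t ∈ Icc t0 t1, ContinuousOn (fun x => ψ t x) (Icc xmin xmax) := by
    intro t htm
    exact hψc.comp ((continuous_const.prodMk continuous_id).continuousOn) fun x hxm => ⟨htm, hxm⟩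
  have hFxslice : ∀ t ∈ Icc t0 t1, ContinuousOn (fun x => Fx t x) (Icc xmin xmax) := by
    intro t htm
    exact hFxc.comp ((continuous_const.prodMk continuous_id).continuousOn) fun x hxm => ⟨htm, hxm⟩
  -- integration by parts identity
  have ibp : ∀ t ∈ Icc t0 t1, ∀ m : ℕ,
      (∫ x in xmin..xmax, x ^ (m + 1) * Ft t x)
        = xmin ^ (m + 1) * u t + (m + 1) * ∫ x in xmin..xmax, x ^ m * ψ t x := by
    intro t htm m
    have hintFx : IntervalIntegrable (fun x => x ^ (m + 1) * Fx t x) volume xmin xmax := by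
      apply ContinuousOn.intervalIntegrable
      rw [uIcc_of_le hxle]
      exact (continuous_pow _).continuousOn.mul (hFxslice t htm)
    have hintψ : IntervalIntegrable (fun x => (m + 1 : ℝ) * x ^ m * ψ t x) volume xmin xmax := by
      apply ContinuousOn.intervalIntegrable
      rw [uIcc_of_le hxle]
      exact (continuous_const.mul (continuous_pow _)).continuousOn.mul (hψslice t htm)
    have ftc : (∫ x in xmin..xmax,
        ((m + 1 : ℝ) * x ^ m * ψ t x + x ^ (m + 1) * Fx t x))
        = xmax ^ (m + 1) * ψ t xmax - xmin ^ (m + 1) * ψ t xmin := by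
      apply intervalIntegral.integral_eq_sub_of_hasDeriv_right_of_le hxle
      · exact ((continuous_pow _).continuousOn).mul (hψslice t htm)
      · intro x hxo
        have hxm : x ∈ Icc xmin xmax := Ioo_subset_Icc_self hxo
        have h1 : HasDerivAt (fun ξ : ℝ => ξ ^ (m + 1)) ((m + 1 : ℝ) * x ^ m) x := by
          simpa using hasDerivAt_pow (m + 1) x
        have h2 : HasDerivAt (fun ξ => ψ t ξ) (Fx t x) x :=
          (hslicex t htm x hxm).hasDerivAt (Icc_mem_nhds hxo.1 hxo.2)
        exact (h1.mul h2).hasDerivWithinAt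
      · exact hintψ.add hintFx
    rw [hbmax t htm, hbmin t htm] at ftc
    have e3 : (∫ x in xmin..xmax, x ^ (m + 1) * Ft t x)
        = ∫ x in xmin..xmax, -(x ^ (m + 1) * Fx t x) := by
      apply intervalIntegral.integral_congr
      intro x hxm
      rw [uIcc_of_le hxle] at hxm
      show x ^ (m + 1) * Ft t x = -(x ^ (m + 1) * Fx t x)
      rw [hPDE' t htm x hxm]; ring
    rw [e3, intervalIntegral.integral_neg]
    have e4 : (∫ x in xmin..xmax, ((m + 1 : ℝ) * x ^ m * ψ t x + x ^ (m + 1) * Fx t x))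
        = (∫ x in xmin..xmax, (m + 1 : ℝ) * x ^ m * ψ t x)
          + ∫ x in xmin..xmax, x ^ (m + 1) * Fx t x :=
      intervalIntegral.integral_add hintψ hintFx
    have e5 : (∫ x in xmin..xmax, (m + 1 : ℝ) * x ^ m * ψ t x)
        = (m + 1 : ℝ) * ∫ x in xmin..xmax, x ^ m * ψ t x := by
      rw [← intervalIntegral.integral_const_mul]
      apply intervalIntegral.integral_congr
      intro x _; ring
    rw [e4, e5] at ftc
    push_cast
    linarith
  -- the first derivative
  have hD3 := paramDeriv t0 t1 xmin xmax ht hx ψ Ft (fun x => x ^ 3)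
    (continuous_pow 3) hψc hFtc hslicet
  have hD2 := paramDeriv t0 t1 xmin xmax ht hx ψ Ft (fun x => x ^ 2)
    (continuous_pow 2) hψc hFtc hslicet
  refine ⟨fun t => xmin ^ 3 * u t + 3 * ∫ x in xmin..xmax, x ^ 2 * ψ t x, ?_, ?_⟩
  · intro t htm
    have h := hD3 t htm
    have e : (∫ x in xmin..xmax, x ^ 3 * Ft t x)
        = xmin ^ 3 * u t + 3 * ∫ x in xmin..xmax, x ^ 2 * ψ t x := by
      have := ibp t htm 2
      push_cast at this
      norm_num at this ⊢
      linarith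
    rwa [e] at h
  · intro t htm
    have hud : HasDerivWithinAt u (derivWithin u (Icc t0 t1) t) (Icc t0 t1) t :=
      ((hu.differentiableOn one_ne_zero) t htm).hasDerivWithinAt
    have h2 := hD2 t htm
    have e2 : (∫ x in xmin..xmax, x ^ 2 * Ft t x)
        = xmin ^ 2 * u t + 2 * ∫ x in xmin..xmax, x ^ 1 * ψ t x := by
      have := ibp t htm 1
      push_cast at this
      norm_num at this ⊢
      linarith
    have e1 : (∫ x in xmin..xmax, x ^ 1 * ψ t x) = ∫ x in xmin..xmax, x * ψ t x := by
      apply intervalIntegral.integral_congr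
      intro x _; ring
    have hcomb : HasDerivWithinAt
        (fun t => xmin ^ 3 * u t + 3 * ∫ x in xmin..xmax, x ^ 2 * ψ t x)
        (xmin ^ 3 * derivWithin u (Icc t0 t1) t
          + 3 * (xmin ^ 2 * u t + 2 * ∫ x in xmin..xmax, x * ψ t x))
        (Icc t0 t1) t := by
      have hpart2 : HasDerivWithinAt (fun t => ∫ x in xmin..xmax, x ^ 2 * ψ t x)
          (xmin ^ 2 * u t + 2 * ∫ x in xmin..xmax, x * ψ t x) (Icc t0 t1) t := by
        rw [← e1, ← e2]; exact h2
      exact (hud.const_mul (xmin ^ 3)).add (hpart2.const_mul 3)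
    convert hcomb using 1
    ring
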